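/- Let f ∈ 𝒮(ℝⁿ; Sᵐℝⁿ) and k ≥ 0 an integer. Then for every (x,ξ) ∈ ℝⁿ × (ℝⁿ∖{0}), (Jᵏf)(x,ξ) = |ξ|^{m−2k−1} Σ_{ℓ=0}^{k} (−1)^{k−ℓ} C(k,ℓ) |ξ|^{ℓ} ⟨ξ,x⟩^{k−ℓ} (Iˡf)(x − (⟨ξ,x⟩/|ξ|²)ξ, ξ/|ξ|); in particular the data (J⁰f,…,Jᵐf) is determined by (I⁰f,…,Iᵐf). -/

import Mathlib

open MeasureTheory Real
open scoped InnerProductSpace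

noncomputable section

abbrev E (n : ℕ) : Type := EuclideanSpace ℝ (Fin n)

/-- The pairing `⟨f(z), ξ^m⟩ = f_{i₁…i_m}(z) ξ^{i₁}⋯ξ^{i_m}`. -/
def tpair {n m : ℕ} (f : (Fin m → Fin n) → E n → ℂ) (z ξ : E n) : ℂ :=
  ∑ i : Fin m → Fin n, f i z * ∏ j, ((ξ (i j) : ℝ) : ℂ)

/-- The momentum ray transform `(Jᵏf)(x,ξ) = ∫ tᵏ ⟨f(x+tξ), ξᵐ⟩ dt`. -/
def Jmrt {n m : ℕ} (k : ℕ) (f : (Fin m → Fin n) → E n → ℂ) (x ξ : E n) : ℂ :=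
  ∫ t : ℝ, (t : ℂ) ^ k * tpair f (x + t • ξ) ξ

/-- `f` is a Schwartz tensor field: each component is a Schwartz function. -/
def IsSchwartzTF {n m : ℕ} (f : (Fin m → Fin n) → E n → ℂ) : Prop :=
  ∀ i, ∃ g : SchwartzMap (E n) ℂ, ∀ z, g z = f i z

/-- `f` is a symmetric tensor field. -/
def IsSymTF {n m : ℕ} (f : (Fin m → Fin n) → E n → ℂ) : Prop :=
  ∀ (i : Fin m → Fin n) (σ : Equiv.Perm (Fin m)), f (i ∘ σ) = f i

lemma tpair_smul {n m : ℕ} (f : (Fin m → Fin n) → E n → ℂ) (z ξ : E n) (c : ℝ) :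
    tpair f z (c • ξ) = (c : ℂ) ^ m * tpair f z ξ := by
  simp only [tpair, Finset.mul_sum]
  refine Finset.sum_congr rfl fun i _ => ?_
  have : ∀ j : Fin m, (((c • ξ) (i j) : ℝ) : ℂ) = (c : ℂ) * ((ξ (i j) : ℝ) : ℂ) := by
    intro j; simp [PiLp.smul_apply, smul_eq_mul]
  rw [Finset.prod_congr rfl fun j _ => this j, Finset.prod_mul_distrib, Finset.prod_const,
    Finset.card_univ, Fintype.card_fin]
  ring

lemma line_temperate {n : ℕ} (x0 ω : E n) :
    Function.HasTemperateGrowth (fun u : ℝ => x0 + u • ω) := by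
  apply Function.HasTemperateGrowth.of_fderiv (k := 1) (C := ‖x0‖ + ‖ω‖)
  · have : (fderiv ℝ (fun u : ℝ => x0 + u • ω)) =
        fun _ => ContinuousLinearMap.toSpanSingleton ℝ ω := by
      funext u
      have h : HasFDerivAt (fun u : ℝ => x0 + u • ω)
          (ContinuousLinearMap.toSpanSingleton ℝ ω) u := by
        have := (ContinuousLinearMap.toSpanSingleton ℝ ω).hasFDerivAt (x := u)
        simpa [ContinuousLinearMap.toSpanSingleton_apply] using this.const_add x0
      exact h.fderiv
    rw [this]
    exact Function.HasTemperateGrowth.const _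
  · exact (differentiable_id.smul_const ω).const_add x0
  · intro u
    have h1 : ‖x0 + u • ω‖ ≤ ‖x0‖ + ‖u • ω‖ := norm_add_le _ _
    rw [norm_smul] at h1
    have := abs_nonneg u
    have := norm_nonneg x0
    have := norm_nonneg ω
    calc ‖x0 + u • ω‖ ≤ ‖x0‖ + |u| * ‖ω‖ := by simpa using h1
    _ ≤ (‖x0‖ + ‖ω‖) * (1 + ‖(u:ℝ)‖) ^ 1 := by
        simp only [pow_one, Real.norm_eq_abs]; nlinarith

lemma integ_line {n m : ℕ} (f : (Fin m → Fin n) → E n → ℂ) (hf : IsSchwartzTF f)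
    (x0 ω : E n) (hω : ‖ω‖ = 1) (ℓ : ℕ) :
    Integrable (fun u : ℝ => (u : ℂ) ^ ℓ * tpair f (x0 + u • ω) ω) := by
  have hup : ∃ (kk : ℕ) (C : ℝ), ∀ u : ℝ, ‖u‖ ≤ C * (1 + ‖x0 + u • ω‖) ^ kk := by
    refine ⟨1, 1 + ‖x0‖, fun u => ?_⟩
    have h1 : ‖u • ω‖ ≤ ‖x0 + u • ω‖ + ‖x0‖ := by
      have := norm_sub_le (x0 + u • ω) x0
      simpa using this
    rw [norm_smul, hω, mul_one] at h1
    have := norm_nonneg (x0 + u • ω)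
    have := norm_nonneg x0
    simp only [Real.norm_eq_abs, pow_one]
    rw [Real.norm_eq_abs] at h1
    nlinarith [abs_nonneg u]
  simp only [tpair, Finset.mul_sum]
  apply integrable_finset_sum
  intro i _
  obtain ⟨g, hg⟩ := hf i
  set ψ : SchwartzMap ℝ ℂ := SchwartzMap.compCLM ℝ (line_temperate x0 ω) hup g with hψ
  have hcomp : ∀ u : ℝ, ψ u = g (x0 + u • ω) := fun u => rfl
  have key : Integrable (fun u : ℝ => (u : ℂ) ^ ℓ * ψ u) := by
    refine (ψ.integrable_pow_mul volume ℓ).mono' ?_ (Filter.Eventually.of_forall fun u => ?_)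
    · exact ((Complex.continuous_ofReal.pow ℓ).mul ψ.continuous).aestronglyMeasurable
    · rw [norm_mul, norm_pow, Complex.norm_real]
  have heq : (fun u : ℝ => (u : ℂ) ^ ℓ * (f i (x0 + u • ω) * ∏ j, ((ω (i j) : ℝ) : ℂ)))
      = fun u : ℝ => ((u : ℂ) ^ ℓ * ψ u) * ∏ j, ((ω (i j) : ℝ) : ℂ) := by
    funext u; rw [hcomp, hg]; ring
  rw [heq]
  exact key.mul_const _

theorem stmt2 {n m : ℕ} (hn : 2 ≤ n)
    (f : (Fin m → Fin n) → E n → ℂ) (hf : IsSchwartzTF f) (hsym : IsSymTF f)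
    (k : ℕ) (x ξ : E n) (hξ : ξ ≠ 0) :
    Jmrt k f x ξ =
      ((‖ξ‖ ^ ((m : ℤ) - 2 * (k : ℤ) - 1) : ℝ) : ℂ) *
        ∑ ℓ ∈ Finset.range (k + 1),
          (-1 : ℂ) ^ (k - ℓ) * (k.choose ℓ : ℂ) * ((‖ξ‖ ^ ℓ : ℝ) : ℂ) *
            ((⟪ξ, x⟫_ℝ ^ (k - ℓ) : ℝ) : ℂ) *
            Jmrt ℓ f (x - (⟪ξ, x⟫_ℝ / ‖ξ‖ ^ 2) • ξ) (‖ξ‖⁻¹ • ξ) := by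
  have hr : (0:ℝ) < ‖ξ‖ := norm_pos_iff.mpr hξ
  set r : ℝ := ‖ξ‖ with hrdef
  set p : ℝ := ⟪ξ, x⟫_ℝ with hpdef
  set ω : E n := r⁻¹ • ξ with hωdef
  set x0 : E n := x - (p / r ^ 2) • ξ with hx0def
  set s : ℝ := p / r with hsdef
  set R : ℂ := (r : ℂ) with hRdef
  have hR : R ≠ 0 := by
    rw [hRdef]; exact_mod_cast hr.ne'
  have hω : ‖ω‖ = 1 := by
    rw [hωdef, norm_smul, norm_inv, Real.norm_eq_abs, abs_of_pos hr, inv_mul_cancel₀ hr.ne']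
  have hξω : ξ = r • ω := by
    rw [hωdef, smul_smul, mul_inv_cancel₀ hr.ne', one_smul]
  have hxt : ∀ t : ℝ, x + t • ξ = x0 + (r * t + s) • ω := by
    intro t
    rw [hωdef, hx0def, smul_smul]
    have hc : (r * t + s) * r⁻¹ = t + p / r ^ 2 := by
      rw [hsdef]; field_simp
    rw [hc, add_smul, sub_add_eq_add_sub, add_sub_assoc]
    congr 1
    abel
  set F : ℝ → ℂ := fun u => (((u : ℂ) - (s : ℂ)) / R) ^ k *
      (R ^ m * tpair f (x0 + u • ω) ω) with hF
  have h1 : ∀ t : ℝ, (t : ℂ) ^ k * tpair f (x + t • ξ) ξ = F (r * t + s) := by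
    intro t
    rw [hxt t]
    conv_lhs => rw [hξω, tpair_smul]
    rw [hF]
    have hc : ((((r * t + s : ℝ)) : ℂ) - (s : ℂ)) / R = (t : ℂ) := by
      rw [hRdef]
      push_cast
      rw [add_sub_cancel_right, mul_comm, mul_div_assoc,
        div_self (by exact_mod_cast hr.ne' : (r:ℂ) ≠ 0), mul_one]
    simp only [hF]
    rw [hc, hRdef]
  have h2 : Jmrt k f x ξ = ∫ t : ℝ, F (r * t + s) := by
    rw [Jmrt]
    exact integral_congr_ae (Filter.Eventually.of_forall h1)
  have h3 : (∫ t : ℝ, F (r * t + s)) = |r⁻¹| • ∫ u : ℝ, F u := by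
    have := MeasureTheory.Measure.integral_comp_mul_left (fun u : ℝ => F (u + s)) r
    simpa [integral_add_right_eq_self (fun u : ℝ => F u) s] using this
  set c : ℕ → ℂ := fun ℓ => (-1 : ℂ) ^ (ℓ + k) * (s : ℂ) ^ (k - ℓ) * (k.choose ℓ : ℂ)
      * R ^ m / R ^ k with hcdef
  have hFu : ∀ u : ℝ, F u = ∑ ℓ ∈ Finset.range (k + 1),
      c ℓ * ((u : ℂ) ^ ℓ * tpair f (x0 + u • ω) ω) := by
    intro u
    rw [hF]
    simp only []
    rw [div_pow, sub_pow, Finset.sum_div, Finset.sum_mul]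
    refine Finset.sum_congr rfl fun ℓ _ => ?_
    rw [hcdef]
    ring
  have h4 : (∫ u : ℝ, F u) = ∑ ℓ ∈ Finset.range (k + 1), c ℓ * Jmrt ℓ f x0 ω := by
    simp_rw [hFu]
    rw [MeasureTheory.integral_finset_sum _ (fun ℓ _ => (integ_line f hf x0 ω hω ℓ).const_mul _)]
    refine Finset.sum_congr rfl fun ℓ _ => ?_
    rw [MeasureTheory.integral_const_mul, Jmrt]
  rw [h2, h3, h4, abs_of_pos (inv_pos.mpr hr), Finset.smul_sum, Finset.mul_sum]
  refine Finset.sum_congr rfl fun ℓ hℓ => ?_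
  rw [Finset.mem_range] at hℓ
  obtain ⟨a, rfl⟩ : ∃ a, k = ℓ + a := ⟨k - ℓ, by omega⟩
  rw [Complex.real_smul, hcdef]
  simp only [Nat.add_sub_cancel_left]
  rw [hsdef]
  have hz : ((m : ℤ) - 2 * ((ℓ + a : ℕ) : ℤ) - 1) = (m : ℤ) - ((2 * (ℓ + a) + 1 : ℕ) : ℤ) := by
    push_cast; ring
  rw [hz, zpow_sub₀ (by exact_mod_cast hr.ne' : (r:ℝ) ≠ 0), zpow_natCast, zpow_natCast]
  have hsign : (-1 : ℂ) ^ (ℓ + (ℓ + a)) = (-1 : ℂ) ^ a := by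
    rw [show ℓ + (ℓ + a) = a + 2 * ℓ by ring, pow_add, pow_mul]
    simp
  rw [← mul_assoc]
  push_cast [hRdef]
  rw [hsign]
  have hrC : (r : ℂ) ≠ 0 := by exact_mod_cast hr.ne'
  field_simp
  have hpa : ((p:ℂ) / (r:ℂ)) ^ a * (r:ℂ) ^ a = (p:ℂ) ^ a := by
    rw [← mul_pow, div_mul_cancel₀ _ hrC]
  linear_combination ((((ℓ + a).choose ℓ : ℕ) : ℂ) * Jmrt ℓ f x0 ω * (r:ℂ) ^ (ℓ + a) * (r:ℂ) ^ ℓ * (r:ℂ)) * hpa
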